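/- Interpolation inequality on Euclidean balls: there exists C = C(k,n) so that for any C^k function u on B_{2r} ⊂ ℝⁿ, ‖u‖_{L^∞(B_r)} ≤ C( r^{-n}‖u‖_{L¹(B_{2r})} + ‖u‖_{L¹(B_{2r})}^{k/(k+n)}·‖∇^k u‖_{L^∞(B_{2r})}^{n/(k+n)} ). -/

import Mathlib

open MeasureTheory

open Finset Set

private lemma diff_identity {F : Type} [AddCommGroup F] [Module ℝ F] (k : ℕ) (g : ℕ → F) :
    ∑ j ∈ range (k+2), ((-1:ℝ)^(k+1+j)*(((k+1).choose j):ℝ)) • g j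
      = ∑ j ∈ range (k+1), ((-1:ℝ)^(k+j)*((k.choose j):ℝ)) • g (j+1)
        - ∑ j ∈ range (k+1), ((-1:ℝ)^(k+j)*((k.choose j):ℝ)) • g j := by
  rw [Finset.sum_range_succ' (fun j => ((-1:ℝ)^(k+1+j)*(((k+1).choose j):ℝ)) • g j) (k+1)]
  rw [Finset.sum_range_succ' (fun j => ((-1:ℝ)^(k+j)*((k.choose j):ℝ)) • g j) k]
  have h1 : ∀ j ∈ range (k+1), ((-1:ℝ)^(k+1+(j+1))*(((k+1).choose (j+1)):ℝ)) • g (j+1)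
      = ((-1:ℝ)^(k+j)*((k.choose j):ℝ)) • g (j+1)
        + ((-1:ℝ)^(k+j)*((k.choose (j+1)):ℝ)) • g (j+1) := by
    intro j _
    rw [Nat.choose_succ_succ, ← add_smul]
    have hp : (-1:ℝ)^(k+1+(j+1)) = (-1)^(k+j) := by
      rw [show k+1+(j+1) = (k+j)+2 by ring, pow_add]; norm_num
    push_cast
    rw [hp, mul_add]
  rw [Finset.sum_congr rfl h1, Finset.sum_add_distrib]
  rw [Finset.sum_range_succ (fun j => ((-1:ℝ)^(k+j)*((k.choose (j+1)):ℝ)) • g (j+1))]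
  have h2 : ∀ j ∈ range k, ((-1:ℝ)^(k+j)*((k.choose (j+1)):ℝ)) • g (j+1)
      = -(((-1:ℝ)^(k+(j+1))*((k.choose (j+1)):ℝ)) • g (j+1)) := by
    intro j _
    rw [← neg_smul]
    congr 1
    rw [show k+(j+1) = (k+j)+1 by ring, pow_succ]
    ring
  rw [Finset.sum_congr rfl h2, Finset.sum_neg_distrib]
  simp [Nat.choose_succ_self, pow_succ]
  abel

private theorem finite_diff_bound {E : Type} [NormedAddCommGroup E] [NormedSpace ℝ E] (k : ℕ) :
    ∀ {F : Type} [NormedAddCommGroup F] [NormedSpace ℝ F]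
      (s : Set E), IsOpen s → Convex ℝ s →
      ∀ (f : E → F) (M : ℝ), ContDiffOn ℝ k f s →
      (∀ y ∈ s, ‖iteratedFDerivWithin ℝ k f s y‖ ≤ M) →
      ∀ (x h : E), (∀ t : ℝ, t ∈ Set.Icc (0:ℝ) (k:ℝ) → x + t • h ∈ s) →
      ‖∑ j ∈ range (k+1), ((-1:ℝ)^(k+j) * (k.choose j : ℝ)) • f (x + (j:ℝ) • h)‖
        ≤ M * ‖h‖ ^ k := by
  induction k with
  | zero =>
    intro F _ _ s hso hsc f M hf hM x h hseg
    have hx : x ∈ s := by simpa using hseg 0 (by simp)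
    have := hM x hx
    rw [norm_iteratedFDerivWithin_zero] at this
    simpa using this
  | succ k ih =>
    intro F _ _ s hso hsc f M hf hM x h hseg
    set F' := fun y => fderivWithin ℝ f s y with hF'
    have hf' : ContDiffOn ℝ k F' s :=
      hf.fderivWithin hso.uniqueDiffOn (by exact_mod_cast le_rfl)
    have hM' : ∀ y ∈ s, ‖iteratedFDerivWithin ℝ k F' s y‖ ≤ M := fun y hy => by
      rw [hF', norm_iteratedFDerivWithin_fderivWithin hso.uniqueDiffOn hy]
      exact hM y hy
    set S := fun y : E => ∑ j ∈ range (k+1),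
        ((-1:ℝ)^(k+j) * (k.choose j : ℝ)) • f (y + (j:ℝ) • h) with hS
    set seg := segment ℝ x (x+h) with hseg'
    have hmem : ∀ y ∈ seg, ∀ t : ℝ, t ∈ Set.Icc (0:ℝ) (k:ℝ) → y + t • h ∈ s := by
      intro y hy t ht
      rw [hseg', segment_eq_image'] at hy
      obtain ⟨τ, hτ, rfl⟩ := hy
      rw [add_sub_cancel_left]
      have : x + τ • h + t • h = x + (τ + t) • h := by rw [add_smul]; abel
      rw [this]
      refine hseg (τ + t) ⟨add_nonneg hτ.1 ht.1, ?_⟩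
      push_cast
      linarith [hτ.2, ht.2]
    set D := fun y : E => ∑ j ∈ range (k+1),
        ((-1:ℝ)^(k+j) * (k.choose j : ℝ)) • F' (y + (j:ℝ) • h) with hD
    have hderiv : ∀ y ∈ seg, HasFDerivWithinAt S (D y) seg y := by
      intro y hy
      refine HasFDerivAt.hasFDerivWithinAt ?_
      refine HasFDerivAt.fun_sum fun j hj => ?_
      have hjk : ((j:ℝ)) ∈ Set.Icc (0:ℝ) (k:ℝ) := by
        constructor
        · positivity
        · exact_mod_cast Nat.lt_succ_iff.mp (Finset.mem_range.mp hj)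
      have hyj : y + (j:ℝ) • h ∈ s := hmem y hy _ hjk
      have hdiff : DifferentiableAt ℝ f (y + (j:ℝ) • h) :=
        (hf.differentiableOn (by simp)).differentiableAt
          (hso.mem_nhds hyj)
      have h2 : HasFDerivAt (fun z : E => z + (j:ℝ) • h) (ContinuousLinearMap.id ℝ E) y :=
        (hasFDerivAt_id y).add_const _
      have h1 : HasFDerivAt (fun z : E => f (z + (j:ℝ) • h)) (fderiv ℝ f (y + (j:ℝ) • h)) y := by
        simpa [Function.comp_def] using hdiff.hasFDerivAt.comp y h2
      have h3 : fderiv ℝ f (y + (j:ℝ) • h) = F' (y + (j:ℝ) • h) := by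
        simp only [hF']
        exact (fderivWithin_of_isOpen hso hyj).symm
      rw [← h3]
      exact h1.const_smul _
    have hDb : ∀ y ∈ seg, ‖D y‖ ≤ M * ‖h‖ ^ k := fun y hy =>
      ih s hso hsc F' M hf' hM' y h (hmem y hy)
    have hMVT := Convex.norm_image_sub_le_of_norm_hasFDerivWithin_le hderiv hDb
      (convex_segment x (x+h)) (left_mem_segment ℝ x (x+h)) (right_mem_segment ℝ x (x+h))
    rw [add_sub_cancel_left] at hMVT
    have hid : ∑ j ∈ range (k + 1 + 1), ((-1:ℝ) ^ (k + 1 + j) * ((k + 1).choose j : ℝ)) • f (x + (j:ℝ) • h)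
        = S (x + h) - S x := by
      rw [hS]
      beta_reduce
      have hg : ∀ j ∈ range (k+1), ((-1:ℝ)^(k+j) * (k.choose j : ℝ)) • f ((x + h) + (j:ℝ) • h)
          = ((-1:ℝ)^(k+j) * (k.choose j : ℝ)) • f (x + ((j+1 : ℕ):ℝ) • h) := by
        intro j _
        congr 2
        push_cast
        rw [add_smul, one_smul]
        abel
      rw [Finset.sum_congr rfl hg]
      exact diff_identity k (fun j => f (x + (j:ℝ) • h))
    calc ‖∑ j ∈ range (k + 1 + 1), ((-1:ℝ) ^ (k + 1 + j) * ((k + 1).choose j : ℝ)) • f (x + (j:ℝ) • h)‖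
        = ‖S (x+h) - S x‖ := by rw [hid]
      _ ≤ M * ‖h‖ ^ k * ‖h‖ := hMVT
      _ = M * ‖h‖ ^ (k+1) := by ring

private theorem bounded_of_contDiffOn {E : Type} [NormedAddCommGroup E] [NormedSpace ℝ E] (k : ℕ) :
    ∀ {F : Type} [NormedAddCommGroup F] [NormedSpace ℝ F]
      (s : Set E), IsOpen s → Convex ℝ s → Bornology.IsBounded s →
      ∀ (f : E → F) (M : ℝ), ContDiffOn ℝ k f s →
      (∀ y ∈ s, ‖iteratedFDerivWithin ℝ k f s y‖ ≤ M) →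
      ∃ C, ∀ y ∈ s, ‖f y‖ ≤ C := by
  induction k with
  | zero =>
    intro F _ _ s hso hsc hsb f M hf hM
    exact ⟨M, fun y hy => by
      have := hM y hy
      rwa [norm_iteratedFDerivWithin_zero] at this⟩
  | succ k ih =>
    intro F _ _ s hso hsc hsb f M hf hM
    rcases s.eq_empty_or_nonempty with rfl | ⟨x0, hx0⟩
    · exact ⟨0, by simp⟩
    have hf' : ContDiffOn ℝ k (fun y => fderivWithin ℝ f s y) s :=
      hf.fderivWithin hso.uniqueDiffOn (by exact_mod_cast le_rfl)
    have hM' : ∀ y ∈ s, ‖iteratedFDerivWithin ℝ k (fun y => fderivWithin ℝ f s y) s y‖ ≤ M :=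
      fun y hy => by
        rw [norm_iteratedFDerivWithin_fderivWithin hso.uniqueDiffOn hy]
        exact hM y hy
    obtain ⟨C1, hC1⟩ := ih s hso hsc hsb (fun y => fderivWithin ℝ f s y) M hf' hM'
    obtain ⟨D, hD⟩ := Metric.isBounded_iff.mp hsb
    have hC1' : 0 ≤ C1 := le_trans (norm_nonneg _) (hC1 x0 hx0)
    refine ⟨‖f x0‖ + C1 * D, fun y hy => ?_⟩
    have hdiff : ∀ z ∈ s, HasFDerivWithinAt f (fderivWithin ℝ f s z) s z := fun z hz =>
      ((hf.differentiableOn (by simp)) z hz).hasFDerivWithinAt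
    have hmvt := Convex.norm_image_sub_le_of_norm_hasFDerivWithin_le hdiff hC1 hsc hx0 hy
    have hdist : ‖y - x0‖ ≤ D := by
      rw [← dist_eq_norm]
      exact hD hy hx0
    calc ‖f y‖ = ‖f x0 + (f y - f x0)‖ := by rw [add_sub_cancel]
      _ ≤ ‖f x0‖ + ‖f y - f x0‖ := norm_add_le _ _
      _ ≤ ‖f x0‖ + C1 * D := by
          refine (add_le_add_iff_left _).2 (le_trans hmvt ?_)
          exact mul_le_mul_of_nonneg_left hdist hC1'

set_option maxHeartbeats 2000000 in
theorem stmt_15 (k n : ℕ) (hk : 1 ≤ k) (hn : 1 ≤ n) :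
    ∃ C : ℝ, 0 < C ∧
      ∀ (r M : ℝ) (u : EuclideanSpace ℝ (Fin n) → ℝ), 0 < r →
        ContDiffOn ℝ k u (Metric.ball 0 (2 * r)) →
        (∀ x ∈ Metric.ball (0 : EuclideanSpace ℝ (Fin n)) (2 * r),
          ‖iteratedFDerivWithin ℝ k u (Metric.ball 0 (2 * r)) x‖ ≤ M) →
        ∀ x ∈ Metric.ball (0 : EuclideanSpace ℝ (Fin n)) r,
          |u x| ≤ C * (r ^ (-(n : ℝ)) *
              (∫ y in Metric.ball (0 : EuclideanSpace ℝ (Fin n)) (2 * r), |u y|) +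
            (∫ y in Metric.ball (0 : EuclideanSpace ℝ (Fin n)) (2 * r), |u y|) ^
                ((k : ℝ) / (k + n)) * M ^ ((n : ℝ) / (k + n))) := by
  have hk1 : (1:ℝ) ≤ (k:ℝ) := by exact_mod_cast hk
  have hkpos : (0:ℝ) < (k:ℝ) := by linarith
  have hknR : (0:ℝ) < (k:ℝ) + (n:ℝ) := by
    have : (1:ℝ) ≤ (n:ℝ) := by exact_mod_cast hn
    linarith
  haveI : Nontrivial (EuclideanSpace ℝ (Fin n)) := by
    refine Module.nontrivial_of_finrank_pos (R := ℝ) ?_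
    rw [finrank_euclideanSpace_fin]; exact hn
  set ω := (volume (Metric.ball (0:EuclideanSpace ℝ (Fin n)) 1)).toReal with hωdef
  have hω : 0 < ω := ENNReal.toReal_pos (Metric.measure_ball_pos volume 0 one_pos).ne'
    measure_ball_lt_top.ne
  have hcoef : (0:ℝ) ≤ 2^k * (k:ℝ)^n / ω := by positivity
  refine ⟨1 + 2^k * (k:ℝ)^n / ω, by linarith, ?_⟩
  intro r M u hr hu hM x hx
  set B2 := Metric.ball (0:EuclideanSpace ℝ (Fin n)) (2*r) with hB2
  set I := ∫ y in B2, |u y| with hIdef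
  have hr2 : 0 < 2*r := by linarith
  have hM0 : 0 ≤ M := le_trans (norm_nonneg _) (hM 0 (Metric.mem_ball_self hr2))
  have hxr : ‖x‖ < r := mem_ball_zero_iff.mp hx
  obtain ⟨C0, hC0⟩ := bounded_of_contDiffOn k B2 Metric.isOpen_ball (convex_ball 0 (2*r))
    Metric.isBounded_ball u M hu hM
  have hu_cont : ContinuousOn u B2 := hu.continuousOn
  have hInt : IntegrableOn (fun y => |u y|) B2 := by
    refine ⟨(hu_cont.abs.aestronglyMeasurable measurableSet_ball), ?_⟩
    refine HasFiniteIntegral.restrict_of_bounded (C := C0) measure_ball_lt_top ?_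
    filter_upwards [ae_restrict_mem measurableSet_ball] with y hy
    simpa [Real.norm_eq_abs, abs_abs] using hC0 y hy
  have hI0 : 0 ≤ I := setIntegral_nonneg measurableSet_ball (fun y _ => abs_nonneg _)
  -- the key inequality, for every 0 < δ ≤ r
  have key : ∀ δ : ℝ, 0 < δ → δ ≤ r →
      |u x| ≤ M * δ^k + (2^k * (k:ℝ)^n / ω) * (I / δ^n) := by
    intro δ hδ hδr
    set ρ := δ / (k:ℝ) with hρdef
    have hρ : 0 < ρ := div_pos hδ hkpos
    have hρδ : ρ ≤ δ := div_le_self hδ.le hk1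
    have hkρ : (k:ℝ) * ρ = δ := by
      rw [hρdef]; field_simp
    have hpt : ∀ h ∈ Metric.ball (0:EuclideanSpace ℝ (Fin n)) ρ,
        |u x| ≤ M * δ^k + ∑ j ∈ range k,
          (k.choose (j+1) : ℝ) * |u (x + ((j+1:ℕ):ℝ) • h)| := by
      intro h hh
      have hhn : ‖h‖ < ρ := mem_ball_zero_iff.mp hh
      have hseg : ∀ t : ℝ, t ∈ Set.Icc (0:ℝ) (k:ℝ) → x + t • h ∈ B2 := by
        intro t ht
        rw [hB2, Metric.mem_ball, dist_zero_right]
        calc ‖x + t • h‖ ≤ ‖x‖ + ‖t • h‖ := norm_add_le _ _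
          _ = ‖x‖ + t * ‖h‖ := by
              rw [norm_smul, Real.norm_eq_abs, abs_of_nonneg ht.1]
          _ ≤ ‖x‖ + (k:ℝ) * ρ := by
              have h1 : t * ‖h‖ ≤ (k:ℝ) * ρ :=
                mul_le_mul ht.2 hhn.le (norm_nonneg _) hkpos.le
              linarith
          _ < 2*r := by rw [hkρ]; linarith
      have hfd := finite_diff_bound k B2 Metric.isOpen_ball (convex_ball 0 (2*r))
        u M hu hM x h hseg
      have hnorm : M * ‖h‖^k ≤ M * δ^k :=
        mul_le_mul_of_nonneg_left
          (pow_le_pow_left₀ (norm_nonneg _) (le_trans hhn.le hρδ) k) hM0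
      rw [Finset.sum_range_succ'
        (fun j => ((-1:ℝ)^(k+j) * (k.choose j : ℝ)) • u (x + (j:ℝ) • h)) k] at hfd
      have hTb : ‖∑ j ∈ range k,
          ((-1:ℝ)^(k+(j+1)) * (k.choose (j+1) : ℝ)) • u (x + ((j+1:ℕ):ℝ) • h)‖
          ≤ ∑ j ∈ range k, (k.choose (j+1) : ℝ) * |u (x + ((j+1:ℕ):ℝ) • h)| := by
        refine le_trans (norm_sum_le _ _) (Finset.sum_le_sum fun j _ => ?_)
        rw [norm_smul, Real.norm_eq_abs, abs_mul, abs_pow, abs_neg, abs_one, one_pow,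
          one_mul, Nat.abs_cast, Real.norm_eq_abs]
      have ha0 : ‖((-1:ℝ)^(k+0) * (k.choose 0 : ℝ)) • u (x + ((0:ℕ):ℝ) • h)‖ = |u x| := by
        simp [norm_smul, Real.norm_eq_abs]
      calc |u x| = ‖((∑ j ∈ range k,
              ((-1:ℝ)^(k+(j+1)) * (k.choose (j+1) : ℝ)) • u (x + ((j+1:ℕ):ℝ) • h))
              + ((-1:ℝ)^(k+0) * (k.choose 0 : ℝ)) • u (x + ((0:ℕ):ℝ) • h))
            - (∑ j ∈ range k,
              ((-1:ℝ)^(k+(j+1)) * (k.choose (j+1) : ℝ)) • u (x + ((j+1:ℕ):ℝ) • h))‖ := by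
            rw [add_sub_cancel_left, ha0]
        _ ≤ ‖(∑ j ∈ range k,
              ((-1:ℝ)^(k+(j+1)) * (k.choose (j+1) : ℝ)) • u (x + ((j+1:ℕ):ℝ) • h))
              + ((-1:ℝ)^(k+0) * (k.choose 0 : ℝ)) • u (x + ((0:ℕ):ℝ) • h)‖
            + ‖∑ j ∈ range k,
              ((-1:ℝ)^(k+(j+1)) * (k.choose (j+1) : ℝ)) • u (x + ((j+1:ℕ):ℝ) • h)‖ :=
            norm_sub_le _ _
        _ ≤ M * δ^k + ∑ j ∈ range k,
              (k.choose (j+1) : ℝ) * |u (x + ((j+1:ℕ):ℝ) • h)| :=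
            add_le_add (le_trans hfd hnorm) hTb
    -- integrate the pointwise bound over h ∈ ball 0 ρ
    set Bρ := Metric.ball (0:EuclideanSpace ℝ (Fin n)) ρ with hBρ
    have hvol : (volume Bρ).toReal = ρ^n * ω := by
      rw [hBρ, Measure.addHaar_ball volume 0 hρ.le, finrank_euclideanSpace_fin,
        ENNReal.toReal_mul, ENNReal.toReal_ofReal (by positivity)]
    have hvolpos : 0 < (volume Bρ).toReal := by rw [hvol]; positivity
    have hmaps : ∀ j ∈ range k, ∀ h ∈ Metric.closedBall (0:EuclideanSpace ℝ (Fin n)) ρ,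
        x + ((j+1:ℕ):ℝ) • h ∈ B2 := by
      intro j hj h hh
      have hhn : ‖h‖ ≤ ρ := mem_closedBall_zero_iff.mp hh
      have hjk : ((j+1:ℕ):ℝ) ≤ (k:ℝ) := by
        exact_mod_cast Finset.mem_range.mp hj
      have hj1 : (0:ℝ) ≤ ((j+1:ℕ):ℝ) := by positivity
      rw [hB2, Metric.mem_ball, dist_zero_right]
      calc ‖x + ((j+1:ℕ):ℝ) • h‖ ≤ ‖x‖ + ‖((j+1:ℕ):ℝ) • h‖ := norm_add_le _ _
        _ = ‖x‖ + ((j+1:ℕ):ℝ) * ‖h‖ := by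
            rw [norm_smul, Real.norm_eq_abs, abs_of_nonneg hj1]
        _ ≤ ‖x‖ + (k:ℝ) * ρ := by
            have : ((j+1:ℕ):ℝ) * ‖h‖ ≤ (k:ℝ) * ρ :=
              mul_le_mul hjk hhn (norm_nonneg _) hkpos.le
            linarith
        _ < 2*r := by rw [hkρ]; linarith
    have hint_j : ∀ j ∈ range k,
        IntegrableOn (fun h => |u (x + ((j+1:ℕ):ℝ) • h)|) Bρ volume := by
      intro j hj
      have hcont : ContinuousOn (fun h : EuclideanSpace ℝ (Fin n) => |u (x + ((j+1:ℕ):ℝ) • h)|)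
          (Metric.closedBall 0 ρ) := by
        refine ContinuousOn.abs ?_
        refine hu_cont.comp ?_ (fun h hh => hmaps j hj h hh)
        fun_prop
      exact (hcont.integrableOn_compact (isCompact_closedBall _ _)).mono_set
        Metric.ball_subset_closedBall
    have hint_sum : IntegrableOn (fun h => ∑ j ∈ range k,
        (k.choose (j+1) : ℝ) * |u (x + ((j+1:ℕ):ℝ) • h)|) Bρ volume := by
      apply integrable_finset_sum
      intro j hj
      exact (hint_j j hj).const_mul _
    have hint_g : IntegrableOn (fun h => M * δ^k + ∑ j ∈ range k,
        (k.choose (j+1) : ℝ) * |u (x + ((j+1:ℕ):ℝ) • h)|) Bρ volume :=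
      (integrableOn_const measure_ball_lt_top.ne).add hint_sum
    have hmono := setIntegral_mono_on
      (integrableOn_const measure_ball_lt_top.ne)
      hint_g measurableSet_ball hpt
    rw [setIntegral_const, smul_eq_mul, measureReal_def] at hmono
    have hsplit : ∫ h in Bρ, (M * δ^k + ∑ j ∈ range k,
          (k.choose (j+1) : ℝ) * |u (x + ((j+1:ℕ):ℝ) • h)|)
        = (volume Bρ).toReal * (M * δ^k) + ∑ j ∈ range k,
          (k.choose (j+1) : ℝ) * ∫ h in Bρ, |u (x + ((j+1:ℕ):ℝ) • h)| := by
      rw [integral_add (integrableOn_const (C := M * δ^k) measure_ball_lt_top.ne) hint_sum,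
        setIntegral_const, smul_eq_mul, measureReal_def, integral_finset_sum _ (fun j hj => (hint_j j hj).const_mul _)]
      congr 1
      exact Finset.sum_congr rfl fun j hj => integral_const_mul _ _
    -- each translated integral is at most I
    have hjI : ∀ j ∈ range k, ∫ h in Bρ, |u (x + ((j+1:ℕ):ℝ) • h)| ≤ I := by
      intro j hj
      set c : ℝ := ((j+1:ℕ):ℝ) with hcdef
      have hc1 : (1:ℝ) ≤ c := by rw [hcdef]; exact_mod_cast Nat.succ_le_succ (Nat.zero_le j)
      have hc0 : (0:ℝ) < c := lt_of_lt_of_le one_pos hc1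
      have hsub : Metric.ball x (c*ρ) ⊆ B2 := by
        intro z hz
        rw [Metric.mem_ball] at hz
        rw [hB2, Metric.mem_ball]
        have hck : c ≤ (k:ℝ) := by
          rw [hcdef]; exact_mod_cast Finset.mem_range.mp hj
        have hcρ : c * ρ ≤ δ := by
          rw [← hkρ]; exact mul_le_mul_of_nonneg_right hck hρ.le
        calc dist z 0 ≤ dist z x + dist x 0 := dist_triangle _ _ _
          _ < c*ρ + r := by
              rw [dist_zero_right]
              exact add_lt_add hz hxr
          _ ≤ 2*r := by linarith
      set G := (Metric.ball x (c*ρ)).indicator (fun z => |u z|) with hGdef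
      have hGint : Integrable G volume := by
        rw [hGdef]
        exact (hInt.mono_set hsub).integrable_indicator measurableSet_ball
      have hGnn : ∀ w, 0 ≤ G w := fun w => by
        rw [hGdef]
        exact Set.indicator_nonneg (fun z _ => abs_nonneg _) w
      have htrans : Integrable (fun w => G (x + w)) volume := by
        have := (measurePreserving_add_left volume x).integrable_comp_emb
          (MeasurableEquiv.addLeft x).measurableEmbedding (g := G)
        exact this.mpr hGint
      have hcomp : Integrable (fun h : EuclideanSpace ℝ (Fin n) => G (x + c • h)) volume :=
        htrans.comp_smul (ne_of_gt hc0)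
      have hG1 : ∫ h in Bρ, |u (x + c • h)| = ∫ h in Bρ, G (x + c • h) := by
        refine setIntegral_congr_fun measurableSet_ball fun h hh => ?_
        rw [hGdef, Set.indicator_of_mem]
        rw [Metric.mem_ball, dist_self_add_left, norm_smul, Real.norm_eq_abs,
          abs_of_pos hc0]
        have hhn : ‖h‖ < ρ := mem_ball_zero_iff.mp hh
        exact (mul_lt_mul_iff_right₀ hc0).mpr hhn
      have hG2 : ∫ h in Bρ, G (x + c • h) ≤ ∫ h, G (x + c • h) :=
        setIntegral_le_integral hcomp (Filter.Eventually.of_forall fun h => hGnn _)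
      have hG3 : ∫ h : EuclideanSpace ℝ (Fin n), G (x + c • h)
          = |((c:ℝ) ^ n)⁻¹| * ∫ w : EuclideanSpace ℝ (Fin n), G (x + w) := by
        have := Measure.integral_comp_smul volume (fun w : EuclideanSpace ℝ (Fin n) => G (x + w)) c
        rw [finrank_euclideanSpace_fin] at this
        simpa [smul_eq_mul] using this
      have hG4 : ∫ w : EuclideanSpace ℝ (Fin n), G (x + w)
          = ∫ w, G w := integral_add_left_eq_self G x
      have hG5 : ∫ w, G w = ∫ z in Metric.ball x (c*ρ), |u z| := by
        rw [hGdef]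
        exact integral_indicator measurableSet_ball
      have hG6 : ∫ z in Metric.ball x (c*ρ), |u z| ≤ I := by
        rw [hIdef]
        refine setIntegral_mono_set hInt
          (Filter.Eventually.of_forall fun z => abs_nonneg _) ?_
        exact Filter.Eventually.of_forall hsub
      have hGnn2 : 0 ≤ ∫ w, G w := integral_nonneg hGnn
      have habs : |((c:ℝ) ^ n)⁻¹| ≤ 1 := by
        rw [abs_of_nonneg (by positivity)]
        refine inv_le_one_of_one_le₀ ?_
        exact one_le_pow₀ hc1
      calc ∫ h in Bρ, |u (x + c • h)| = ∫ h in Bρ, G (x + c • h) := hG1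
        _ ≤ ∫ h, G (x + c • h) := hG2
        _ = |((c:ℝ) ^ n)⁻¹| * ∫ w : EuclideanSpace ℝ (Fin n), G (x + w) := hG3
        _ ≤ 1 * ∫ w : EuclideanSpace ℝ (Fin n), G (x + w) := by
            rw [hG4]
            exact mul_le_mul_of_nonneg_right habs hGnn2
        _ = ∫ w, G w := by rw [one_mul, hG4]
        _ ≤ I := le_trans (le_of_eq hG5) hG6
    -- sum up
    have hsum2 : ∑ j ∈ range k, (k.choose (j+1) : ℝ) * ∫ h in Bρ, |u (x + ((j+1:ℕ):ℝ) • h)|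
        ≤ 2^k * I := by
      have hch : ∑ j ∈ range k, (k.choose (j+1) : ℝ) ≤ 2^k := by
        have h1 : ∑ j ∈ range k, k.choose (j+1) ≤ 2^k := by
          have h2 := Finset.sum_range_succ' (fun j => k.choose j) k
          have h3 := Nat.sum_range_choose k
          omega
        calc ∑ j ∈ range k, (k.choose (j+1) : ℝ)
            = ((∑ j ∈ range k, k.choose (j+1) : ℕ) : ℝ) := by push_cast; ring
          _ ≤ ((2^k : ℕ) : ℝ) := by exact_mod_cast h1
          _ = 2^k := by push_cast; ring
      calc ∑ j ∈ range k, (k.choose (j+1) : ℝ) * ∫ h in Bρ, |u (x + ((j+1:ℕ):ℝ) • h)|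
          ≤ ∑ j ∈ range k, (k.choose (j+1) : ℝ) * I :=
            Finset.sum_le_sum fun j hj =>
              mul_le_mul_of_nonneg_left (hjI j hj) (by positivity)
        _ = (∑ j ∈ range k, (k.choose (j+1) : ℝ)) * I := by rw [← Finset.sum_mul]
        _ ≤ 2^k * I := mul_le_mul_of_nonneg_right hch hI0
    have hfinal : (volume Bρ).toReal * |u x|
        ≤ (volume Bρ).toReal * (M * δ^k) + 2^k * I := by
      rw [hsplit] at hmono
      linarith
    have heq : (2^k * (k:ℝ)^n / ω) * (I / δ^n) = 2^k * I / (ρ^n * ω) := by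
      rw [hρdef]
      rw [div_pow]
      field_simp
    rw [heq]
    rw [← mul_le_mul_iff_right₀ hvolpos]
    calc (volume Bρ).toReal * |u x| ≤ (volume Bρ).toReal * (M * δ^k) + 2^k * I := hfinal
      _ = (volume Bρ).toReal * (M * δ^k + 2^k * I / (ρ^n * ω)) := by
          rw [hvol]
          have hρn : (0:ℝ) < ρ^n * ω := by positivity
          field_simp
  -- now choose δ optimally
  have hrn : r ^ (-(n:ℝ)) = (r^n)⁻¹ := by
    rw [Real.rpow_neg hr.le, Real.rpow_natCast]
  have hterm1 : 0 ≤ r ^ (-(n:ℝ)) * I := by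
    have : (0:ℝ) ≤ r ^ (-(n:ℝ)) := Real.rpow_nonneg hr.le _
    exact mul_nonneg this hI0
  have hterm2 : 0 ≤ I ^ ((k:ℝ)/((k:ℝ)+(n:ℝ))) * M ^ ((n:ℝ)/((k:ℝ)+(n:ℝ))) :=
    mul_nonneg (Real.rpow_nonneg hI0 _) (Real.rpow_nonneg hM0 _)
  by_cases hMz : M = 0
  · -- M = 0 : take δ = r
    have h1 := key r hr le_rfl
    rw [hMz, zero_mul, zero_add] at h1
    have h2 : (2^k * (k:ℝ)^n / ω) * (I / r^n) ≤ (1 + 2^k * (k:ℝ)^n / ω) * (r ^ (-(n:ℝ)) * I) := by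
      have e1 : I / r^n = r ^ (-(n:ℝ)) * I := by rw [hrn]; ring
      rw [e1]
      exact mul_le_mul_of_nonneg_right (by linarith) hterm1
    calc |u x| ≤ (2^k * (k:ℝ)^n / ω) * (I / r^n) := h1
      _ ≤ (1 + 2^k * (k:ℝ)^n / ω) * (r ^ (-(n:ℝ)) * I) := h2
      _ ≤ (1 + 2^k * (k:ℝ)^n / ω) * (r ^ (-(n:ℝ)) * I
            + I ^ ((k:ℝ)/((k:ℝ)+(n:ℝ))) * M ^ ((n:ℝ)/((k:ℝ)+(n:ℝ)))) := by
          refine mul_le_mul_of_nonneg_left ?_ (by linarith)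
          linarith
  · have hMpos : 0 < M := lt_of_le_of_ne hM0 (Ne.symm hMz)
    by_cases hIz : I = 0
    · -- I = 0 : let δ → 0
      have hux : |u x| ≤ 0 := by
        refine le_of_forall_pos_le_add fun ε hε => ?_
        set δ := min r ((ε/M) ^ ((1:ℝ)/(k:ℝ))) with hδdef
        have hεM : 0 < ε/M := div_pos hε hMpos
        have hδpos : 0 < δ := lt_min hr (Real.rpow_pos_of_pos hεM _)
        have h1 := key δ hδpos (min_le_left _ _)
        rw [hIz] at h1
        have hδk : δ^k ≤ ε/M := by
          calc δ^k ≤ (((ε/M) ^ ((1:ℝ)/(k:ℝ))))^k :=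
              pow_le_pow_left₀ hδpos.le (min_le_right _ _) k
            _ = ε/M := by
                rw [← Real.rpow_natCast ((ε/M) ^ ((1:ℝ)/(k:ℝ))) k,
                  ← Real.rpow_mul hεM.le, one_div, inv_mul_cancel₀ (ne_of_gt hkpos),
                  Real.rpow_one]
        have h2 : M * δ^k ≤ ε := by
          calc M * δ^k ≤ M * (ε/M) := mul_le_mul_of_nonneg_left hδk hM0
            _ = ε := by field_simp
        simp only [zero_div, mul_zero, add_zero] at h1
        linarith
      have hrhs : (0:ℝ) ≤ (1 + 2^k * (k:ℝ)^n / ω) * (r ^ (-(n:ℝ)) * I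
          + I ^ ((k:ℝ)/((k:ℝ)+(n:ℝ))) * M ^ ((n:ℝ)/((k:ℝ)+(n:ℝ)))) := by
        refine mul_nonneg (by linarith) (by linarith)
      linarith
    · have hIpos : 0 < I := lt_of_le_of_ne hI0 (Ne.symm hIz)
      have hIM : 0 < I/M := div_pos hIpos hMpos
      set q := (I/M) ^ ((1:ℝ)/((k:ℝ)+(n:ℝ))) with hqdef
      have hqpos : 0 < q := Real.rpow_pos_of_pos hIM _
      set P := I ^ ((k:ℝ)/((k:ℝ)+(n:ℝ))) * M ^ ((n:ℝ)/((k:ℝ)+(n:ℝ))) with hPdef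
      have hMqk : M * q^k = P := by
        rw [hqdef, hPdef, ← Real.rpow_natCast ((I/M) ^ ((1:ℝ)/((k:ℝ)+(n:ℝ)))) k,
          ← Real.rpow_mul hIM.le, Real.div_rpow hI0 hM0]
        rw [eq_comm]
        have hMe : M ^ ((n:ℝ)/((k:ℝ)+(n:ℝ))) = M / M ^ ((1:ℝ)/((k:ℝ)+(n:ℝ)) * k) := by
          rw [eq_div_iff (ne_of_gt (Real.rpow_pos_of_pos hMpos _)),
            ← Real.rpow_add hMpos]
          rw [show (n:ℝ)/((k:ℝ)+(n:ℝ)) + (1:ℝ)/((k:ℝ)+(n:ℝ)) * k = 1 by field_simp; ring,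
            Real.rpow_one]
        rw [hMe]
        rw [show (k:ℝ)/((k:ℝ)+(n:ℝ)) = (1:ℝ)/((k:ℝ)+(n:ℝ)) * k by field_simp]
        field_simp
      have hIqn : I / q^n = P := by
        rw [hqdef, hPdef, ← Real.rpow_natCast ((I/M) ^ ((1:ℝ)/((k:ℝ)+(n:ℝ)))) n,
          ← Real.rpow_mul hIM.le, Real.div_rpow hI0 hM0]
        have hIe : I ^ ((k:ℝ)/((k:ℝ)+(n:ℝ))) = I / I ^ ((1:ℝ)/((k:ℝ)+(n:ℝ)) * n) := by
          rw [eq_div_iff (ne_of_gt (Real.rpow_pos_of_pos hIpos _)),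
            ← Real.rpow_add hIpos]
          rw [show (k:ℝ)/((k:ℝ)+(n:ℝ)) + (1:ℝ)/((k:ℝ)+(n:ℝ)) * n = 1 by field_simp,
            Real.rpow_one]
        rw [hIe]
        rw [show (n:ℝ)/((k:ℝ)+(n:ℝ)) = (1:ℝ)/((k:ℝ)+(n:ℝ)) * n by field_simp]
        have h1 : (0:ℝ) < I ^ ((1:ℝ)/((k:ℝ)+(n:ℝ)) * n) := Real.rpow_pos_of_pos hIpos _
        have h2 : (0:ℝ) < M ^ ((1:ℝ)/((k:ℝ)+(n:ℝ)) * n) := Real.rpow_pos_of_pos hMpos _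
        field_simp
      have hP0 : 0 ≤ P := by rw [← hMqk]; positivity
      rcases le_or_gt q r with hqr | hrq
      · -- q ≤ r : take δ = q
        have h1 := key q hqpos hqr
        rw [hMqk, hIqn] at h1
        calc |u x| ≤ P + (2^k * (k:ℝ)^n / ω) * P := h1
          _ = (1 + 2^k * (k:ℝ)^n / ω) * P := by ring
          _ ≤ (1 + 2^k * (k:ℝ)^n / ω) * (r ^ (-(n:ℝ)) * I + P) := by
              refine mul_le_mul_of_nonneg_left ?_ (by linarith)
              linarith
      · -- r < q : take δ = r
        have h1 := key r hr le_rfl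
        have hqkn : q^(k+n) = I/M := by
          rw [hqdef, ← Real.rpow_natCast ((I/M) ^ ((1:ℝ)/((k:ℝ)+(n:ℝ)))) (k+n),
            ← Real.rpow_mul hIM.le]
          rw [show (1:ℝ)/((k:ℝ)+(n:ℝ)) * ((k+n : ℕ):ℝ) = 1 by push_cast; field_simp,
            Real.rpow_one]
        have h2 : M * r^k ≤ I / r^n := by
          have h3 : r^(k+n) ≤ I/M := by
            calc r^(k+n) ≤ q^(k+n) := pow_le_pow_left₀ hr.le hrq.le _
              _ = I/M := hqkn
          rw [le_div_iff₀ (by positivity : (0:ℝ) < r^n)]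
          calc M * r^k * r^n = M * r^(k+n) := by rw [pow_add]; ring
            _ ≤ M * (I/M) := mul_le_mul_of_nonneg_left h3 hM0
            _ = I := by field_simp
        have e1 : I / r^n = r ^ (-(n:ℝ)) * I := by rw [hrn]; ring
        calc |u x| ≤ M * r^k + (2^k * (k:ℝ)^n / ω) * (I / r^n) := h1
          _ ≤ I / r^n + (2^k * (k:ℝ)^n / ω) * (I / r^n) := by linarith
          _ = (1 + 2^k * (k:ℝ)^n / ω) * (r ^ (-(n:ℝ)) * I) := by rw [e1]; ring
          _ ≤ (1 + 2^k * (k:ℝ)^n / ω) * (r ^ (-(n:ℝ)) * I + P) := by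
              refine mul_le_mul_of_nonneg_left ?_ (by linarith)
              linarith
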